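/- arXiv:2410.22196 — 3 statements merged into one kernel-verified Lean document; each statement's English description precedes it below -/
import Mathlib

section
/- Let b₁,…,bₙ be linearly independent in ℝ^k with Gram–Schmidt vectors b₁*,…,bₙ* and coefficients μ_{i,j} = ⟨bᵢ, bⱼ*⟩/⟨bⱼ*, bⱼ*⟩. Fix i < n and suppose (δ − μ_{i+1,i}²)‖bᵢ*‖² > ‖b_{i+1}*‖² for some real δ. Let B' be the family obtained from B by swapping bᵢ and b_{i+1}. Then S(B') < δ·S(B), where S denotes the product of Gram determinants of all initial segments. -/
open Finset RealInnerProductSpace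

noncomputable section

instance (n : ℕ) : WellFoundedLT (Fin n) := Finite.to_wellFoundedLT

/-- the matrix of the first \`m\` columns -/
def seg (k n : ℕ) (b : Fin n → EuclideanSpace ℝ (Fin k)) (m : ℕ) (hm : m ≤ n) :
    Matrix (Fin k) (Fin m) ℝ :=
  Matrix.of fun r j => b (Fin.castLE hm j) r

/-- the size of a basis: the product of the Gram determinants of all initial segments -/
def S (k n : ℕ) (b : Fin n → EuclideanSpace ℝ (Fin k)) : ℝ :=
  ∏ i : Fin n, ((seg k n b (i + 1) i.isLt).transpose * seg k n b (i + 1) i.isLt).det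

open Matrix InnerProductSpace

lemma eval_sum {k : ℕ} {α : Type*} (s : Finset α) (f : α → EuclideanSpace ℝ (Fin k)) (r : Fin k) :
    (∑ a ∈ s, f a) r = ∑ a ∈ s, f a r :=
  by simp [WithLp.ofLp_sum, Finset.sum_apply]

lemma gram_factor {k m : ℕ} (G : Matrix (Fin k) (Fin m) ℝ) (R : Matrix (Fin m) (Fin m) ℝ)
    (hR1 : ∀ j, R j j = 1) (hR0 : ∀ j l : Fin m, l < j → R j l = 0)
    (hG : ∀ j l : Fin m, j ≠ l → (∑ r, G r j * G r l) = 0) :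
    ((G * R)ᵀ * (G * R)).det = ∏ j, ∑ r, G r j * G r j := by
  have hdiag : Gᵀ * G = Matrix.diagonal (fun j => ∑ r, G r j * G r j) := by
    ext j l
    by_cases h : j = l
    · subst h; simp [Matrix.mul_apply, Matrix.diagonal]
    · simp [Matrix.mul_apply, Matrix.diagonal_apply_ne _ h]
      exact hG j l h
  have hRdet : R.det = 1 := by
    rw [Matrix.det_of_upperTriangular (fun j l h => hR0 j l h)]
    simp [hR1]
  have : (G * R)ᵀ * (G * R) = Rᵀ * (Gᵀ * G) * R := by
    rw [Matrix.transpose_mul, Matrix.mul_assoc, Matrix.mul_assoc, Matrix.mul_assoc]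
  rw [this, Matrix.det_mul, Matrix.det_mul, Matrix.det_transpose, hRdet, hdiag,
    Matrix.det_diagonal]
  ring

lemma Iio_castLE {n m : ℕ} (hm : m ≤ n) (c : Fin m) :
    Finset.Iio (Fin.castLE hm c) =
      (Finset.Iio c).map ⟨Fin.castLE hm, Fin.castLE_injective hm⟩ := by
  ext x
  simp only [Finset.mem_Iio, Finset.mem_map, Function.Embedding.coeFn_mk]
  constructor
  · intro h
    exact ⟨⟨x.val, lt_trans (by simpa [Fin.lt_def] using h) c.isLt⟩,
      by simpa [Fin.lt_def] using h, by simp [Fin.ext_iff]⟩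
  · rintro ⟨a, ha, rfl⟩
    rw [Fin.lt_def] at ha ⊢
    exact ha

lemma seg_det (k n : ℕ) (b : Fin n → EuclideanSpace ℝ (Fin k)) (m : ℕ) (hm : m ≤ n) :
    ((seg k n b m hm).transpose * seg k n b m hm).det
      = ∏ j : Fin m, ‖gramSchmidt ℝ b (Fin.castLE hm j)‖ ^ 2 := by
  set gs := gramSchmidt ℝ b with hgs
  set R : Matrix (Fin m) (Fin m) ℝ := Matrix.of fun j c =>
    if j = c then 1 else if j < c then
      ⟪gs (Fin.castLE hm j), b (Fin.castLE hm c)⟫ / ‖gs (Fin.castLE hm j)‖ ^ 2 else 0 with hR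
  have hR1 : ∀ j, R j j = 1 := by intro j; simp [hR]
  have hR0 : ∀ j l : Fin m, l < j → R j l = 0 := by
    intro j l h; simp [hR, h.ne', not_lt_of_gt h]
  have hinner : ∀ j l : Fin m, (∑ r, seg k n gs m hm r j * seg k n gs m hm r l)
      = ⟪gs (Fin.castLE hm j), gs (Fin.castLE hm l)⟫ := by
    intro j l; simp [seg, PiLp.inner_apply]; exact Finset.sum_congr rfl fun _ _ => mul_comm _ _
  have hG : ∀ j l : Fin m, j ≠ l →
      (∑ r, seg k n gs m hm r j * seg k n gs m hm r l) = 0 := by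
    intro j l hjl
    rw [hinner]
    exact gramSchmidt_orthogonal ℝ b (fun h => hjl (Fin.castLE_injective hm h))
  have hcol : ∀ c : Fin m, b (Fin.castLE hm c) = ∑ j : Fin m, R j c • gs (Fin.castLE hm j) := by
    intro c
    have hb := gramSchmidt_def'' ℝ b (Fin.castLE hm c)
    rw [Iio_castLE hm c, Finset.sum_map] at hb
    rw [hb, ← Finset.add_sum_erase _ _ (Finset.mem_univ c)]
    congr 1
    · simp [hR, hgs]
    · refine (Finset.sum_congr rfl ?_).trans (Finset.sum_subset ?_ ?_)
      · intro j hj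
        have hjc : j < c := Finset.mem_Iio.1 hj
        simp [hR, hgs, hjc, hjc.ne, Function.Embedding.coeFn_mk]
      · intro j hj
        exact Finset.mem_erase.2 ⟨(Finset.mem_Iio.1 hj).ne, Finset.mem_univ j⟩
      · intro j hj hnot
        have h1 : ¬ j < c := fun h => hnot (Finset.mem_Iio.2 h)
        have hne : j ≠ c := (Finset.mem_erase.1 hj).1
        simp [hR, hne, h1]
  have hfac : seg k n b m hm = seg k n gs m hm * R := by
    ext r c
    rw [Matrix.mul_apply]
    show b (Fin.castLE hm c) r = _
    rw [hcol c, eval_sum]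
    refine Finset.sum_congr rfl fun j _ => ?_
    show R j c * gs (Fin.castLE hm j) r = _
    exact mul_comm _ _
  calc ((seg k n b m hm).transpose * seg k n b m hm).det
      = ((seg k n gs m hm * R)ᵀ * (seg k n gs m hm * R)).det := by rw [← hfac]
    _ = ∏ j, ∑ r, seg k n gs m hm r j * seg k n gs m hm r j := gram_factor _ _ hR1 hR0 hG
    _ = ∏ j : Fin m, ‖gs (Fin.castLE hm j)‖ ^ 2 := by
        refine Finset.prod_congr rfl fun j _ => ?_
        rw [hinner, real_inner_self_eq_norm_sq]


lemma gs_congr_aux {k n : ℕ} (f g : Fin n → EuclideanSpace ℝ (Fin k)) :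
    ∀ (N : ℕ) (j : Fin n), j.val ≤ N → (∀ l, l ≤ j → f l = g l) →
      gramSchmidt ℝ f j = gramSchmidt ℝ g j := by
  intro N
  induction N with
  | zero =>
    intro j hj h
    rw [gramSchmidt_def, gramSchmidt_def, h j le_rfl]
    congr 1
    apply Finset.sum_congr rfl
    intro l hl
    exact absurd (Finset.mem_Iio.1 hl) (by rw [Fin.lt_def]; omega)
  | succ N ih =>
    intro j hj h
    rw [gramSchmidt_def, gramSchmidt_def, h j le_rfl]
    congr 1
    apply Finset.sum_congr rfl
    intro l hl
    have hlj : l < j := Finset.mem_Iio.1 hl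
    rw [ih l (by have := Fin.lt_def.1 hlj; omega)
      (fun l' hl' => h l' (le_trans hl' hlj.le))]

lemma gs_congr {k n : ℕ} (f g : Fin n → EuclideanSpace ℝ (Fin k)) (j : Fin n)
    (h : ∀ l, l ≤ j → f l = g l) : gramSchmidt ℝ f j = gramSchmidt ℝ g j :=
  gs_congr_aux f g j.val j le_rfl h

set_option maxHeartbeats 1600000 in
theorem stmt9 (k n : ℕ) (b : Fin n → EuclideanSpace ℝ (Fin k))
    (hb : LinearIndependent ℝ b) (δ : ℝ)
    (i : ℕ) (hi : i + 1 < n)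
    (gs : Fin n → EuclideanSpace ℝ (Fin k)) (hgs : gs = InnerProductSpace.gramSchmidt ℝ b)
    (μ : ℝ)
    (hμ : μ = ⟪b ⟨i + 1, hi⟩, gs ⟨i, Nat.lt_of_succ_lt hi⟩⟫ /
      ⟪gs ⟨i, Nat.lt_of_succ_lt hi⟩, gs ⟨i, Nat.lt_of_succ_lt hi⟩⟫)
    (hcond : (δ - μ ^ 2) * ‖gs ⟨i, Nat.lt_of_succ_lt hi⟩‖ ^ 2 > ‖gs ⟨i + 1, hi⟩‖ ^ 2)
    (b' : Fin n → EuclideanSpace ℝ (Fin k))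
    (hb' : b' = b ∘ Equiv.swap ⟨i, Nat.lt_of_succ_lt hi⟩ ⟨i + 1, hi⟩) :
    S k n b' < δ * S k n b := by
  subst hgs
  set i' : Fin n := ⟨i, Nat.lt_of_succ_lt hi⟩ with hi'
  set i1 : Fin n := ⟨i + 1, hi⟩ with hi1
  have vi' : (i' : ℕ) = i := rfl
  have vi1 : (i1 : ℕ) = i + 1 := rfl
  have hne : i' ≠ i1 := by simp [hi', hi1, Fin.ext_iff]
  -- basic swap facts
  have hb'fix : ∀ l : Fin n, l.val < i → b' l = b l := by
    intro l hl
    rw [hb']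
    simp only [Function.comp_apply]
    rw [Equiv.swap_apply_of_ne_of_ne
      (fun h => by rw [Fin.ext_iff, vi'] at h; omega)
      (fun h => by rw [Fin.ext_iff, vi1] at h; omega)]
  have hb'i : b' i' = b i1 := by
    rw [hb']; simp only [Function.comp_apply, Equiv.swap_apply_left]
  have hgs'eq : ∀ l : Fin n, l.val < i → gramSchmidt ℝ b' l = gramSchmidt ℝ b l := by
    intro l hl
    exact gs_congr b' b l fun l' hl' => hb'fix l' (lt_of_le_of_lt (Fin.le_def.1 hl') hl)
  -- the new i-th Gram-Schmidt vector
  have step1 : gramSchmidt ℝ b' i' = b i1 -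
      ∑ l ∈ Finset.Iio i', ((ℝ ∙ (gramSchmidt ℝ b l)).starProjection (b i1) :
        EuclideanSpace ℝ (Fin k)) := by
    rw [gramSchmidt_def, hb'i]
    congr 1
    refine Finset.sum_congr rfl fun l hl => ?_
    have hl' : l.val < i := Fin.lt_def.1 (Finset.mem_Iio.1 hl)
    rw [hgs'eq l hl']
  have hIio : Finset.Iio i1 = insert i' (Finset.Iio i') := by
    ext x
    simp only [Finset.mem_Iio, Finset.mem_insert, Fin.lt_def, Fin.ext_iff, vi', vi1]
    omega
  have step2 : gramSchmidt ℝ b i1 = b i1 -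
      (((ℝ ∙ (gramSchmidt ℝ b i')).starProjection (b i1) : EuclideanSpace ℝ (Fin k)) +
      ∑ l ∈ Finset.Iio i', ((ℝ ∙ (gramSchmidt ℝ b l)).starProjection (b i1) :
        EuclideanSpace ℝ (Fin k))) := by
    rw [gramSchmidt_def, hIio, Finset.sum_insert (by simp)]
  have hgs'i : gramSchmidt ℝ b' i' = gramSchmidt ℝ b i1 + μ • gramSchmidt ℝ b i' := by
    rw [step1, step2, Submodule.starProjection_singleton, hμ, real_inner_self_eq_norm_sq,
      real_inner_comm, RCLike.ofReal_real_eq_id, id_eq]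
    abel
  have horth : ⟪gramSchmidt ℝ b i1, gramSchmidt ℝ b i'⟫ = 0 :=
    gramSchmidt_orthogonal ℝ b hne.symm
  have hV : ‖gramSchmidt ℝ b' i'‖ ^ 2
      = ‖gramSchmidt ℝ b i1‖ ^ 2 + μ ^ 2 * ‖gramSchmidt ℝ b i'‖ ^ 2 := by
    rw [hgs'i, norm_add_sq_real, real_inner_smul_right, horth, norm_smul]
    simp only [Real.norm_eq_abs, mul_pow, sq_abs, mul_zero]
    ring
  have hkey : ∀ j : Fin n, j ≠ i' →
      ((seg k n b' (j + 1) j.isLt).transpose * seg k n b' (j + 1) j.isLt).det =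
      ((seg k n b (j + 1) j.isLt).transpose * seg k n b (j + 1) j.isLt).det := by
    intro j hj
    have hjv : (j : ℕ) ≠ i := fun h => hj (Fin.ext (h.trans vi'.symm))
    rcases lt_or_gt_of_ne hjv with hlt | hgt
    · have hseg : seg k n b' (j + 1) j.isLt = seg k n b (j + 1) j.isLt := by
        ext r c
        show b' (Fin.castLE j.isLt c) r = b (Fin.castLE j.isLt c) r
        rw [hb'fix _ (by have hc := c.isLt; simp only [Fin.coe_castLE]; omega)]
      rw [hseg]
    · have hi1m : i + 1 < (j : ℕ) + 1 := by omega
      set ci : Fin ((j : ℕ) + 1) := ⟨i, by omega⟩ with hci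
      set ci1 : Fin ((j : ℕ) + 1) := ⟨i + 1, hi1m⟩ with hci1
      have hcast : ∀ x : Fin ((j : ℕ) + 1),
          b' (Fin.castLE j.isLt x) = b (Fin.castLE j.isLt (Equiv.swap ci ci1 x)) := by
        intro x
        rw [hb']
        simp only [Function.comp_apply]
        exact congrArg b
          (Function.Injective.swap_apply (Fin.castLE_injective j.isLt) ci ci1 x)
      have hmat : (seg k n b' (j + 1) j.isLt).transpose * seg k n b' (j + 1) j.isLt =
          ((seg k n b (j + 1) j.isLt).transpose * seg k n b (j + 1) j.isLt).submatrix
            (Equiv.swap ci ci1) (Equiv.swap ci ci1) := by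
        ext x y
        simp only [Matrix.mul_apply, Matrix.submatrix_apply, Matrix.transpose_apply, seg,
          Matrix.of_apply]
        exact Finset.sum_congr rfl fun r _ => by rw [hcast x, hcast y]
      rw [hmat, Matrix.det_submatrix_equiv_self]
  have hgsne : ∀ l : Fin n, gramSchmidt ℝ b l ≠ 0 := fun l => gramSchmidt_ne_zero l hb
  have hDpos : ∀ j : Fin n,
      0 < ((seg k n b (j + 1) j.isLt).transpose * seg k n b (j + 1) j.isLt).det := by
    intro j
    rw [seg_det]
    exact Finset.prod_pos fun c _ => pow_pos (norm_pos_iff.2 (hgsne _)) 2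
  have hgpos : (0 : ℝ) < ‖gramSchmidt ℝ b i'‖ ^ 2 := pow_pos (norm_pos_iff.2 (hgsne _)) 2
  have hsame : ∀ c : Fin (i' : ℕ),
      gramSchmidt ℝ b' (Fin.castLE i'.isLt c.castSucc)
        = gramSchmidt ℝ b (Fin.castLE i'.isLt c.castSucc) := by
    intro c
    have hc : (c : ℕ) < i := lt_of_lt_of_le c.isLt (le_of_eq vi')
    refine hgs'eq _ ?_
    simpa using hc
  have hlast : Fin.castLE i'.isLt (Fin.last (i' : ℕ)) = i' := rfl
  set P : ℝ := ∏ c : Fin (i' : ℕ), ‖gramSchmidt ℝ b (Fin.castLE i'.isLt c.castSucc)‖ ^ 2 with hP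
  have e2 : ((seg k n b (i' + 1) i'.isLt).transpose * seg k n b (i' + 1) i'.isLt).det
      = P * ‖gramSchmidt ℝ b i'‖ ^ 2 := by
    rw [seg_det, Fin.prod_univ_castSucc, hlast]
  have e1 : ((seg k n b' (i' + 1) i'.isLt).transpose * seg k n b' (i' + 1) i'.isLt).det
      = P * ‖gramSchmidt ℝ b' i'‖ ^ 2 := by
    rw [seg_det, Fin.prod_univ_castSucc, hlast]
    congr 1
    exact Finset.prod_congr rfl fun c _ => by rw [hsame c]
  set Q : ℝ := ∏ j ∈ Finset.univ.erase i',
    ((seg k n b (j + 1) j.isLt).transpose * seg k n b (j + 1) j.isLt).det with hQ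
  have hSb : S k n b = P * ‖gramSchmidt ℝ b i'‖ ^ 2 * Q := by
    rw [S, ← Finset.mul_prod_erase _ _ (Finset.mem_univ i'), e2]
  have hSb' : S k n b' = P * ‖gramSchmidt ℝ b' i'‖ ^ 2 * Q := by
    rw [S, ← Finset.mul_prod_erase _ _ (Finset.mem_univ i'), e1]
    congr 1
    exact Finset.prod_congr rfl fun j hj => hkey j (Finset.mem_erase.1 hj).1
  have hQpos : 0 < Q := Finset.prod_pos fun j _ => hDpos j
  have hPpos : 0 < P := Finset.prod_pos fun c _ => pow_pos (norm_pos_iff.2 (hgsne _)) 2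
  have hVlt : ‖gramSchmidt ℝ b' i'‖ ^ 2 < δ * ‖gramSchmidt ℝ b i'‖ ^ 2 := by
    rw [hV]; nlinarith [hcond]
  rw [hSb, hSb']
  nlinarith [mul_pos hPpos hQpos, hVlt, hgpos]
end
end

section
/- Let δ ∈ (1/4, 1) and let b₁,…,bₙ be a δ-LLL reduced basis of a lattice Λ in ℝ^k. Then for every nonzero v ∈ Λ, (δ − 1/4)^{(n−1)/2}·‖b₁‖ ≤ ‖v‖. -/
open Finset RealInnerProductSpace

noncomputable section

set_option maxHeartbeats 1000000 in
theorem stmt15 (k n : ℕ) (b : Fin n → EuclideanSpace ℝ (Fin k))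
    (hb : LinearIndependent ℝ b)
    (δ : ℝ) (hδ : δ ∈ Set.Ioo (1/4 : ℝ) 1)
    (gs : Fin n → EuclideanSpace ℝ (Fin k)) (hgs : gs = InnerProductSpace.gramSchmidt ℝ b)
    (μ : Fin n → Fin n → ℝ)
    (hμ : ∀ i j, μ i j = ⟪b i, gs j⟫ / ⟪gs j, gs j⟫)
    (hred1 : ∀ i j : Fin n, j < i → |μ i j| ≤ 1/2)
    (hred2 : ∀ (i : ℕ) (hi : i + 1 < n),
      (δ - μ ⟨i + 1, hi⟩ ⟨i, Nat.lt_of_succ_lt hi⟩ ^ 2) *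
          ‖gs ⟨i, Nat.lt_of_succ_lt hi⟩‖ ^ 2 ≤ ‖gs ⟨i + 1, hi⟩‖ ^ 2)
    (hn : 0 < n)
    (v : EuclideanSpace ℝ (Fin k)) (hv : v ≠ 0)
    (z : Fin n → ℤ) (hvz : v = ∑ i : Fin n, (z i : ℝ) • b i) :
    (δ - 1/4) ^ (((n : ℝ) - 1) / 2) * ‖b ⟨0, hn⟩‖ ≤ ‖v‖ := by
  classical
  haveI : NeZero n := ⟨hn.ne'⟩
  obtain ⟨hδ1, hδ2⟩ := hδ
  set c : ℝ := δ - 1/4 with hc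
  have hc0 : 0 < c := by simp only [hc]; linarith
  have hc1 : c ≤ 1 := by simp only [hc]; linarith
  -- gs nonzero
  have hgsne : ∀ i : Fin n, gs i ≠ 0 := by
    intro i; rw [hgs]; exact InnerProductSpace.gramSchmidt_ne_zero i hb
  -- gs 0 = b 0
  have h0 : gs ⟨0, hn⟩ = b ⟨0, hn⟩ := by
    rw [hgs, InnerProductSpace.gramSchmidt_def]
    have : Finset.Iio (⟨0, hn⟩ : Fin n) = ∅ := by
      ext j; simp [Fin.lt_def]
    rw [this, Finset.sum_empty, sub_zero]
  -- μ squared bound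
  have hμsq : ∀ (i : ℕ) (hi : i + 1 < n),
      μ ⟨i + 1, hi⟩ ⟨i, Nat.lt_of_succ_lt hi⟩ ^ 2 ≤ 1/4 := by
    intro i hi
    have h1 := hred1 ⟨i + 1, hi⟩ ⟨i, Nat.lt_of_succ_lt hi⟩ (by simp [Fin.lt_def])
    have := pow_le_pow_left₀ (abs_nonneg _) h1 2
    rw [sq_abs] at this
    calc _ ≤ (1/2 : ℝ)^2 := this
    _ = 1/4 := by norm_num
  -- inductive bound
  have key : ∀ (m : ℕ) (hm : m < n), c ^ m * ‖gs ⟨0, hn⟩‖ ^ 2 ≤ ‖gs ⟨m, hm⟩‖ ^ 2 := by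
    intro m
    induction m with
    | zero => intro hm; simp
    | succ m ih =>
      intro hm
      have hm' : m < n := Nat.lt_of_succ_lt hm
      have h1 : c * ‖gs ⟨m, hm'⟩‖ ^ 2 ≤ ‖gs ⟨m + 1, hm⟩‖ ^ 2 := by
        refine le_trans ?_ (hred2 m hm)
        apply mul_le_mul_of_nonneg_right _ (sq_nonneg _)
        have := hμsq m hm
        simp only [hc]; linarith
      calc c ^ (m + 1) * ‖gs ⟨0, hn⟩‖ ^ 2 = c * (c ^ m * ‖gs ⟨0, hn⟩‖ ^ 2) := by ring
      _ ≤ c * ‖gs ⟨m, hm'⟩‖ ^ 2 := by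
          exact mul_le_mul_of_nonneg_left (ih hm') hc0.le
      _ ≤ ‖gs ⟨m + 1, hm⟩‖ ^ 2 := h1
  -- max index with nonzero coefficient
  have hex : ∃ j : Fin n, z j ≠ 0 := by
    by_contra h
    push_neg at h
    apply hv
    rw [hvz]
    apply Finset.sum_eq_zero
    intro j _
    rw [h j]; simp
  set s : Finset (Fin n) := Finset.univ.filter (fun j => z j ≠ 0) with hs
  have hsne : s.Nonempty := by
    obtain ⟨j, hj⟩ := hex
    exact ⟨j, by simp [hs, hj]⟩
  set i : Fin n := s.max' hsne with hi
  have hzi : z i ≠ 0 := by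
    have := s.max'_mem hsne
    simp [hs] at this
    exact this
  have hzgt : ∀ j : Fin n, i < j → z j = 0 := by
    intro j hj
    by_contra h
    exact absurd (s.le_max' j (by simp [hs, h])) (not_le.mpr hj)
  -- inner product of gs i with b i
  have hbii : ⟪gs i, b i⟫ = ‖gs i‖ ^ 2 := by
    conv_lhs => rw [hgs, InnerProductSpace.gramSchmidt_def'' ℝ b i]
    rw [inner_add_right, inner_sum]
    rw [← hgs, real_inner_self_eq_norm_sq]
    convert add_zero _
    apply Finset.sum_eq_zero
    intro j hj
    have hji : j < i := Finset.mem_Iio.mp hj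
    rw [real_inner_smul_right, hgs, InnerProductSpace.gramSchmidt_orthogonal ℝ b hji.ne', mul_zero]
  -- inner product of gs i with v
  have hiv : ⟪gs i, v⟫ = (z i : ℝ) * ‖gs i‖ ^ 2 := by
    rw [hvz, inner_sum]
    rw [Finset.sum_eq_single i]
    · rw [real_inner_smul_right, hbii]
    · intro j _ hj
      rcases hj.lt_or_gt with h | h
      · rw [real_inner_smul_right, hgs, InnerProductSpace.gramSchmidt_inv_triangular ℝ b h, mul_zero]
      · rw [hzgt j h]; simp
    · intro h; exact absurd (Finset.mem_univ i) h
  -- norm bound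
  have hnv : ‖gs i‖ ≤ ‖v‖ := by
    have hgsipos : 0 < ‖gs i‖ := norm_pos_iff.mpr (hgsne i)
    have h1 : ‖gs i‖ ^ 2 ≤ |⟪gs i, v⟫| := by
      rw [hiv, abs_mul, abs_of_nonneg (sq_nonneg ‖gs i‖ : (0:ℝ) ≤ _)]
      have : (1 : ℝ) ≤ |(z i : ℝ)| := by
        rw [← Int.cast_abs]
        exact_mod_cast Int.one_le_abs hzi
      nlinarith [sq_nonneg ‖gs i‖]
    have h2 : |⟪gs i, v⟫| ≤ ‖gs i‖ * ‖v‖ := abs_real_inner_le_norm _ _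
    nlinarith
  -- combine
  have hib : (i : ℕ) ≤ n - 1 := Nat.le_sub_one_of_lt i.isLt
  have hexp : ((i : ℕ) : ℝ) / 2 ≤ ((n : ℝ) - 1) / 2 := by
    have h1 : (i : ℕ) + 1 ≤ n := i.isLt
    have h2 : ((i : ℕ) : ℝ) + 1 ≤ (n : ℝ) := by exact_mod_cast h1
    linarith
  have hr1 : c ^ (((n : ℝ) - 1) / 2) ≤ c ^ (((i : ℕ) : ℝ) / 2) :=
    Real.rpow_le_rpow_of_exponent_ge hc0 hc1 hexp
  have hr2 : c ^ (((i : ℕ) : ℝ) / 2) * ‖gs ⟨0, hn⟩‖ ≤ ‖gs i‖ := by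
    have hsq : (c ^ (((i : ℕ) : ℝ) / 2) * ‖gs ⟨0, hn⟩‖) ^ 2 ≤ ‖gs i‖ ^ 2 := by
      have : (c ^ (((i : ℕ) : ℝ) / 2)) ^ 2 = c ^ (i : ℕ) := by
        rw [← Real.rpow_natCast (c ^ (((i : ℕ) : ℝ) / 2)) 2, ← Real.rpow_mul hc0.le]
        norm_num
      rw [mul_pow, this]
      have := key (i : ℕ) i.isLt
      simpa using this
    have h1 : 0 ≤ c ^ (((i : ℕ) : ℝ) / 2) * ‖gs ⟨0, hn⟩‖ :=
      mul_nonneg (Real.rpow_nonneg hc0.le _) (norm_nonneg _)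
    nlinarith [norm_nonneg (gs i)]
  calc c ^ (((n : ℝ) - 1) / 2) * ‖b ⟨0, hn⟩‖
      = c ^ (((n : ℝ) - 1) / 2) * ‖gs ⟨0, hn⟩‖ := by rw [h0]
    _ ≤ c ^ (((i : ℕ) : ℝ) / 2) * ‖gs ⟨0, hn⟩‖ :=
        mul_le_mul_of_nonneg_right hr1 (norm_nonneg _)
    _ ≤ ‖gs i‖ := hr2
    _ ≤ ‖v‖ := hnv
end
end

section
/- Let δ ∈ (1/4, 1) and let b₁,…,bₙ be a δ-LLL reduced basis with Gram–Schmidt vectors b₁*,…,bₙ*. Then for every i ≤ n, ‖b₁‖² ≤ ‖bᵢ*‖² / (δ − 1/4)^{i−1}. -/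
open Finset RealInnerProductSpace

noncomputable section

theorem stmt16 (k n : ℕ) (b : Fin n → EuclideanSpace ℝ (Fin k))
    (hb : LinearIndependent ℝ b)
    (δ : ℝ) (hδ : δ ∈ Set.Ioo (1/4 : ℝ) 1)
    (gs : Fin n → EuclideanSpace ℝ (Fin k)) (hgs : gs = InnerProductSpace.gramSchmidt ℝ b)
    (μ : Fin n → Fin n → ℝ)
    (hμ : ∀ i j, μ i j = ⟪b i, gs j⟫ / ⟪gs j, gs j⟫)
    (hred1 : ∀ i j : Fin n, j < i → |μ i j| ≤ 1/2)
    (hred2 : ∀ (i : ℕ) (hi : i + 1 < n),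
      (δ - μ ⟨i + 1, hi⟩ ⟨i, Nat.lt_of_succ_lt hi⟩ ^ 2) *
          ‖gs ⟨i, Nat.lt_of_succ_lt hi⟩‖ ^ 2 ≤ ‖gs ⟨i + 1, hi⟩‖ ^ 2) :
    ∀ i : Fin n,
      ‖b ⟨0, Nat.lt_of_le_of_lt (Nat.zero_le i.val) i.isLt⟩‖ ^ 2 ≤
        ‖gs i‖ ^ 2 / (δ - 1/4) ^ (i : ℕ) := by
  intro i
  have hpos : (0:ℝ) < δ - 1/4 := by have := hδ.1; linarith
  have hn : 0 < n := Nat.lt_of_le_of_lt (Nat.zero_le i.val) i.isLt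
  have hb0 : ∀ (h : 0 < n), b ⟨0, h⟩ = gs ⟨0, h⟩ := by
    intro h
    rw [hgs, InnerProductSpace.gramSchmidt_def]
    have : Finset.Iio (⟨0, h⟩ : Fin n) = ∅ := by
      ext j; simp [Fin.lt_def]
    rw [this]
    simp
  have key : ∀ m (hm : m < n),
      (δ - 1/4) ^ m * ‖gs ⟨0, Nat.lt_of_le_of_lt (Nat.zero_le m) hm⟩‖ ^ 2 ≤
        ‖gs ⟨m, hm⟩‖ ^ 2 := by
    intro m
    induction m with
    | zero => intro hm; simp
    | succ p ih =>
      intro hm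
      have hp : p < n := Nat.lt_of_succ_lt hm
      have h2 := hred2 p hm
      have hmu := hred1 ⟨p+1, hm⟩ ⟨p, hp⟩ (by simp [Fin.lt_def])
      have hmu2 : μ ⟨p+1, hm⟩ ⟨p, hp⟩ ^ 2 ≤ 1/4 := by
        rcases abs_le.mp hmu with ⟨h1, h2⟩; nlinarith
      have hg : (δ - 1/4) * ‖gs ⟨p, hp⟩‖ ^ 2 ≤ ‖gs ⟨p+1, hm⟩‖ ^ 2 := by
        nlinarith [sq_nonneg ‖gs ⟨p, hp⟩‖]
      have hih := ih hp
      have h0 : (0:ℝ) ≤ ‖gs ⟨0, Nat.lt_of_le_of_lt (Nat.zero_le p) hp⟩‖ ^ 2 :=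
        sq_nonneg _
      calc (δ - 1/4) ^ (p+1) * ‖gs ⟨0, Nat.lt_of_le_of_lt (Nat.zero_le (p+1)) hm⟩‖ ^ 2
          = (δ - 1/4) * ((δ - 1/4) ^ p * ‖gs ⟨0, Nat.lt_of_le_of_lt (Nat.zero_le p) hp⟩‖ ^ 2) := by
            ring
        _ ≤ (δ - 1/4) * ‖gs ⟨p, hp⟩‖ ^ 2 := by
            exact mul_le_mul_of_nonneg_left hih hpos.le
        _ ≤ _ := hg
  have hk := key i.val i.isLt
  rw [le_div_iff₀ (pow_pos hpos i.val), hb0 hn]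
  calc ‖gs ⟨0, hn⟩‖ ^ 2 * (δ - 1/4) ^ (i:ℕ)
      = (δ - 1/4) ^ (i:ℕ) * ‖gs ⟨0, hn⟩‖ ^ 2 := by ring
    _ ≤ ‖gs ⟨i.val, i.isLt⟩‖ ^ 2 := hk
    _ = ‖gs i‖ ^ 2 := by rw [Fin.eta]
end
end
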